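/- The number of ordered pairs (u₁,u₂) of units of Z/nZ with u₁ + u₂ = r is (n/rad(n)) · ∏_{p|n, p|r} (p-1) · ∏_{p|n, p∤r} (p-2). -/

import Mathlib

def rad (n : ℕ) : ℕ := n.primeFactors.prod id

open Finset

private noncomputable def F (R n : ℕ) : ℕ :=
  Nat.card {x : ZMod n // IsUnit x ∧ IsUnit ((R : ZMod n) - x)}

private theorem prod_isUnit {M N : Type*} [Monoid M] [Monoid N] (a : M) (b : N) :
    IsUnit ((a, b) : M × N) ↔ IsUnit a ∧ IsUnit b := by
  constructor
  · intro h
    exact ⟨h.map (MonoidHom.fst M N), h.map (MonoidHom.snd M N)⟩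
  · rintro ⟨⟨u, hu⟩, ⟨v, hv⟩⟩
    refine ⟨⟨(a, b), ((u⁻¹ : Mˣ), (v⁻¹ : Nˣ)), ?_, ?_⟩, rfl⟩ <;>
      simp [Prod.ext_iff, ← hu, ← hv]

private theorem card_pairs (n : ℕ) (r : ZMod n) :
    Nat.card {u : (ZMod n)ˣ × (ZMod n)ˣ // ((u.1 : ZMod n)) + (u.2 : ZMod n) = r} =
      Nat.card {x : ZMod n // IsUnit x ∧ IsUnit (r - x)} := by
  apply Nat.card_congr
  refine ⟨fun u => ⟨(u.1.1 : ZMod n), (u.1.1).isUnit, ?_⟩,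
          fun x => ⟨(x.2.1.unit, x.2.2.unit), ?_⟩, ?_, ?_⟩
  · exact (eq_sub_of_add_eq' u.2) ▸ (u.1.2).isUnit
  · simp [IsUnit.unit_spec]
  · rintro ⟨⟨u₁, u₂⟩, h⟩
    apply Subtype.ext
    apply Prod.ext <;> apply Units.ext
    · simp
    · simp only [IsUnit.unit_spec]
      rw [← h]; ring
  · rintro ⟨x, hx⟩
    apply Subtype.ext
    simp [IsUnit.unit_spec]

private theorem F_mul {a b : ℕ} (_ha : a ≠ 0) (_hb : b ≠ 0) (hab : Nat.Coprime a b) (R : ℕ) :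
    F R (a * b) = F R a * F R b := by
  rw [F, F, F, ← Nat.card_prod]
  apply Nat.card_congr
  set e := ZMod.chineseRemainder hab with he
  refine Equiv.trans
    (Equiv.subtypeEquiv e.toEquiv
      (q := fun y => (IsUnit y.1 ∧ IsUnit ((R : ZMod a) - y.1)) ∧
                     (IsUnit y.2 ∧ IsUnit ((R : ZMod b) - y.2))) ?_)
    (Equiv.subtypeProdEquivProd
      (p := fun z : ZMod a => IsUnit z ∧ IsUnit ((R : ZMod a) - z))
      (q := fun z : ZMod b => IsUnit z ∧ IsUnit ((R : ZMod b) - z)))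
  intro x
  have hiso : ∀ z : ZMod (a * b), IsUnit z ↔ IsUnit (e z) := by
    intro z
    constructor
    · exact fun h => h.map (e : ZMod (a * b) →+* ZMod a × ZMod b)
    · intro h
      have := h.map (e.symm : ZMod a × ZMod b →+* ZMod (a * b))
      simpa using this
  have hsub : e ((R : ZMod (a * b)) - x) = ((R : ZMod a) - (e x).1, (R : ZMod b) - (e x).2) := by
    rw [map_sub, map_natCast]
    ext <;> simp [Prod.fst_sub, Prod.snd_sub]
  have hx : (e x) = ((e x).1, (e x).2) := rfl
  rw [hiso x, hiso ((R : ZMod (a * b)) - x), hsub, hx, prod_isUnit, prod_isUnit]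
  simp only [RingEquiv.toEquiv_eq_coe, Equiv.coe_fn_mk, EquivLike.coe_coe]
  tauto

private def fiberEquiv {p e : ℕ} [NeZero p] (h : p ∣ p ^ e) (P : ZMod p → Prop) :
    {x : ZMod (p ^ e) // P (ZMod.castHom h (ZMod p) x)} ≃
      {y : ZMod p // P y} × {k : ZMod (p ^ e) // ZMod.castHom h (ZMod p) k = 0} := by
  set π := ZMod.castHom h (ZMod p) with hπ
  have hs : ∀ y : ZMod p, π ((y.val : ZMod (p ^ e))) = y := by
    intro y
    rw [map_natCast, ZMod.natCast_zmod_val]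
  refine ⟨fun x => (⟨π x.1, x.2⟩, ⟨x.1 - (((π x.1).val : ℕ) : ZMod (p ^ e)), ?_⟩),
          fun yk => ⟨((yk.1.1.val : ℕ) : ZMod (p ^ e)) + yk.2.1, ?_⟩, ?_, ?_⟩
  · rw [map_sub, hs, sub_self]
  · rw [map_add, hs, yk.2.2, add_zero]; exact yk.1.2
  · rintro ⟨x, hx⟩
    apply Subtype.ext
    simp only
    ring
  · rintro ⟨⟨y, hy⟩, ⟨k, hk⟩⟩
    have h1 : π (((y.val : ℕ) : ZMod (p ^ e)) + k) = y := by rw [map_add, hs, hk, add_zero]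
    apply Prod.ext
    · exact Subtype.ext h1
    · apply Subtype.ext
      simp only
      rw [h1]
      ring

private theorem card_cond_comp {p e : ℕ} (hp : p.Prime) (he : 0 < e) (P : ZMod p → Prop) :
    Nat.card {x : ZMod (p ^ e) // P (ZMod.castHom (dvd_pow_self p he.ne') (ZMod p) x)} =
      p ^ (e - 1) * Nat.card {y : ZMod p // P y} := by
  haveI : NeZero p := ⟨hp.ne_zero⟩
  haveI : NeZero (p ^ e) := ⟨pow_ne_zero _ hp.ne_zero⟩
  set h := dvd_pow_self p he.ne'
  have hK : Nat.card {k : ZMod (p ^ e) // ZMod.castHom h (ZMod p) k = 0} = p ^ (e - 1) := by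
    have h1 := Nat.card_congr (fiberEquiv h (fun _ => True))
    rw [Nat.card_prod] at h1
    have h2 : Nat.card {x : ZMod (p ^ e) // True} = p ^ e := by
      rw [Nat.card_congr (Equiv.subtypeUnivEquiv fun _ => trivial), Nat.card_eq_fintype_card,
        ZMod.card]
    have h3 : Nat.card {y : ZMod p // True} = p := by
      rw [Nat.card_congr (Equiv.subtypeUnivEquiv fun _ => trivial), Nat.card_eq_fintype_card,
        ZMod.card]
    rw [h2, h3] at h1
    have hpe : p ^ e = p * p ^ (e - 1) := by
      rw [← pow_succ']
      congr 1
      omega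
    exact Nat.eq_of_mul_eq_mul_left hp.pos (h1.symm.trans hpe)
  rw [Nat.card_congr (fiberEquiv h P), Nat.card_prod, hK]
  ring

private theorem F_pp {p e : ℕ} (hp : p.Prime) (he : 0 < e) (R : ℕ) :
    F R (p ^ e) = p ^ (e - 1) * (if p ∣ R then p - 1 else p - 2) := by
  haveI : Fact p.Prime := ⟨hp⟩
  haveI : NeZero (p ^ e) := ⟨pow_ne_zero _ hp.ne_zero⟩
  set π := ZMod.castHom (dvd_pow_self p he.ne') (ZMod p) with hπ
  have hval : ∀ x : ZMod (p ^ e), π x = ((x.val : ℕ) : ZMod p) := by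
    intro x
    conv_lhs => rw [← ZMod.natCast_zmod_val x]
    rw [map_natCast]
  have hiu : ∀ x : ZMod (p ^ e), IsUnit x ↔ π x ≠ 0 := by
    intro x
    rw [hval, Ne, ZMod.natCast_eq_zero_iff]
    conv_lhs => rw [← ZMod.natCast_zmod_val x]
    rw [ZMod.isUnit_iff_coprime, Nat.coprime_pow_right_iff he, Nat.coprime_comm,
      hp.coprime_iff_not_dvd]
  have key : ∀ x : ZMod (p ^ e),
      (IsUnit x ∧ IsUnit (((R : ℕ) : ZMod (p ^ e)) - x)) ↔
        (fun y => y ≠ 0 ∧ (R : ZMod p) - y ≠ 0) (π x) := by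
    intro x
    simp only
    rw [hiu, hiu, map_sub, map_natCast]
  have hcount : Nat.card {y : ZMod p // y ≠ 0 ∧ (R : ZMod p) - y ≠ 0} =
      if p ∣ R then p - 1 else p - 2 := by
    rw [Nat.card_eq_fintype_card, Fintype.card_subtype]
    have hset : ∀ y : ZMod p, (y ≠ 0 ∧ (R : ZMod p) - y ≠ 0) ↔
        ¬ (y ∈ ({0, (R : ZMod p)} : Finset (ZMod p))) := by
      intro y
      simp only [Finset.mem_insert, Finset.mem_singleton]
      rw [sub_ne_zero]
      constructor
      · rintro ⟨h1, h2⟩ (h | h) <;> [exact h1 h; exact h2 h.symm]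
      · intro h; exact ⟨fun hy => h (Or.inl hy), fun hy => h (Or.inr hy.symm)⟩
    have hfe : (univ.filter (fun y : ZMod p => y ≠ 0 ∧ (R : ZMod p) - y ≠ 0)) =
        univ \ ({0, (R : ZMod p)} : Finset (ZMod p)) := by
      ext y
      rw [Finset.mem_filter, Finset.mem_sdiff]
      simp only [Finset.mem_univ, true_and]
      exact hset y
    rw [hfe, Finset.card_sdiff_of_subset (Finset.subset_univ _), Finset.card_univ, ZMod.card]
    by_cases hpR : p ∣ R
    · have hc : (R : ZMod p) = 0 := (ZMod.natCast_eq_zero_iff R p).mpr hpR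
      rw [if_pos hpR, hc]
      simp
    · have hc : (R : ZMod p) ≠ 0 := fun h => hpR ((ZMod.natCast_eq_zero_iff R p).mp h)
      rw [if_neg hpR, Finset.card_insert_of_notMem (by simpa using hc.symm),
        Finset.card_singleton]
  rw [F]
  rw [Nat.card_congr (Equiv.subtypeEquivRight key), hπ]
  rw [card_cond_comp hp he (fun y => y ≠ 0 ∧ (R : ZMod p) - y ≠ 0)]
  rw [hcount]

private theorem main_aux (R : ℕ) : ∀ n : ℕ, n ≠ 0 →
    F R n = (n / rad n) * (∏ p ∈ n.primeFactors.filter (fun p => p ∣ R), (p - 1)) *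
      ∏ p ∈ n.primeFactors.filter (fun p => ¬ p ∣ R), (p - 2) := by
  intro n
  induction n using Nat.recOnPosPrimePosCoprime with
  | prime_pow p e hpp he =>
    intro _
    have hp : p.Prime := hpp
    have hpf : (p ^ e).primeFactors = {p} := Nat.primeFactors_prime_pow he.ne' hp
    have hrad : rad (p ^ e) = p := by rw [rad, hpf, Finset.prod_singleton, id]
    have hdiv : p ^ e / p = p ^ (e - 1) := by
      conv_lhs => rw [← Nat.succ_pred_eq_of_pos he, pow_succ]
      exact Nat.mul_div_cancel _ hp.pos
    rw [F_pp hp he, hrad, hdiv, hpf]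
    by_cases hpR : p ∣ R
    · rw [if_pos hpR]
      rw [Finset.filter_singleton, if_pos hpR, Finset.filter_singleton, if_neg (by simpa using hpR)]
      simp
    · rw [if_neg hpR]
      rw [Finset.filter_singleton, if_neg hpR, Finset.filter_singleton, if_pos (by simpa using hpR)]
      simp
  | zero => intro h; exact absurd rfl h
  | one =>
    intro _
    have h1 : F R 1 = 1 := by
      rw [F, Nat.card_congr (Equiv.subtypeUnivEquiv fun x =>
        ⟨isUnit_of_subsingleton x, isUnit_of_subsingleton _⟩)]
      simp [Nat.card_eq_fintype_card]
    rw [h1]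
    simp [rad]
  | coprime a b ha hb hab iha ihb =>
    intro _
    have ha0 : a ≠ 0 := by omega
    have hb0 : b ≠ 0 := by omega
    have hpf : (a * b).primeFactors = a.primeFactors ∪ b.primeFactors :=
      Nat.primeFactors_mul ha0 hb0
    have hdisj : Disjoint a.primeFactors b.primeFactors := hab.disjoint_primeFactors
    have hrad : rad (a * b) = rad a * rad b := by
      rw [rad, rad, rad, hpf, Finset.prod_union hdisj]
    have hdvd_a : rad a ∣ a := Nat.prod_primeFactors_dvd a
    have hdvd_b : rad b ∣ b := Nat.prod_primeFactors_dvd b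
    have hdiv : a * b / rad (a * b) = (a / rad a) * (b / rad b) := by
      rw [hrad, Nat.div_mul_div_comm hdvd_a hdvd_b]
    have hf1 : ((a * b).primeFactors.filter (fun p => p ∣ R)) =
        (a.primeFactors.filter (fun p => p ∣ R)) ∪ (b.primeFactors.filter (fun p => p ∣ R)) := by
      rw [hpf, Finset.filter_union]
    have hf2 : ((a * b).primeFactors.filter (fun p => ¬ p ∣ R)) =
        (a.primeFactors.filter (fun p => ¬ p ∣ R)) ∪
          (b.primeFactors.filter (fun p => ¬ p ∣ R)) := by
      rw [hpf, Finset.filter_union]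
    rw [F_mul ha0 hb0 hab, iha ha0, ihb hb0, hdiv, hf1, hf2,
      Finset.prod_union (hdisj.mono (Finset.filter_subset _ _) (Finset.filter_subset _ _)),
      Finset.prod_union (hdisj.mono (Finset.filter_subset _ _) (Finset.filter_subset _ _))]
    ring

theorem sum_of_two_units_count (n : ℕ) (hn : 0 < n) (r : ZMod n) :
    Nat.card {u : (ZMod n)ˣ × (ZMod n)ˣ // ((u.1 : ZMod n)) + (u.2 : ZMod n) = r} =
      (n / rad n) * (∏ p ∈ n.primeFactors.filter (fun p => (p : ℕ) ∣ r.val), (p - 1))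
        * ∏ p ∈ n.primeFactors.filter (fun p => ¬ (p : ℕ) ∣ r.val), (p - 2) := by
  haveI : NeZero n := ⟨hn.ne'⟩
  rw [card_pairs]
  have h := main_aux r.val n hn.ne'
  rw [F] at h
  rwa [ZMod.natCast_zmod_val r] at h
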